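/- Let V be 4-dimensional over Z/2 with non-degenerate quadratic form g of Arf invariant 0. If T ∈ O(V,g) is a U-map (i.e. T interchanges the sets V₁ and V₂) and T² = Id, then rank(T − Id) is even. -/
import Mathlib

theorem stmt16 {V' : Type*} [AddCommGroup V'] [Module (ZMod 2) V']
    [FiniteDimensional (ZMod 2) V']
    (hdim : Module.finrank (ZMod 2) V' = 2)
    (g' : V' → ZMod 2) (hg'0 : g' 0 = 0) (hg'1 : ∀ x : V', x ≠ 0 → g' x = 1)
    (B' : LinearMap.BilinForm (ZMod 2) V')
    (hquad : ∀ x y, g' (x + y) = g' x + g' y + B' x y)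
    (T : Module.End (ZMod 2) (V' × V')) (hTb : Function.Bijective T)
    (hTg : ∀ p : V' × V', g' (T p).1 + g' (T p).2 = g' p.1 + g' p.2)
    (hswap₁ : ∀ p : V' × V', p.1 ≠ 0 ∧ p.2 = 0 → (T p).1 = 0 ∧ (T p).2 ≠ 0)
    (hswap₂ : ∀ p : V' × V', p.1 = 0 ∧ p.2 ≠ 0 → (T p).1 ≠ 0 ∧ (T p).2 = 0)
    (hinv : T * T = 1) :
    Even (Module.finrank (ZMod 2) (LinearMap.range (T - 1))) := by
  set S : Module.End (ZMod 2) (V' × V') := T - 1 with hSdef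
  have h2T : T + T = 0 := by
    have h := two_smul (ZMod 2) T
    rw [show (2 : ZMod 2) = 0 by decide, zero_smul] at h
    exact h.symm
  have h21 : (1 : Module.End (ZMod 2) (V' × V')) + 1 = 0 := by
    have h := two_smul (ZMod 2) (1 : Module.End (ZMod 2) (V' × V'))
    rw [show (2 : ZMod 2) = 0 by decide, zero_smul] at h
    exact h.symm
  have hS2 : S * S = 0 := by
    have e1 : S * S = T * T - T - T + 1 := by
      rw [hSdef, sub_mul, mul_sub, mul_sub, mul_one, one_mul, one_mul]
      abel
    have e2 : T * T - T - T + 1 = (1 + 1) - (T + T) := by rw [hinv]; abel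
    rw [e1, e2, h2T, h21, sub_zero]
  have hle : LinearMap.range S ≤ LinearMap.ker S := by
    rintro x ⟨y, rfl⟩
    have : (S * S) y = 0 := by rw [hS2]; rfl
    simpa [LinearMap.mem_ker, Module.End.mul_apply] using this
  have hrk : Module.finrank (ZMod 2) (LinearMap.range S)
      + Module.finrank (ZMod 2) (LinearMap.ker S) = 4 := by
    rw [LinearMap.finrank_range_add_finrank_ker S, Module.finrank_prod, hdim]
  have hmono := Submodule.finrank_mono hle
  set r := Module.finrank (ZMod 2) (LinearMap.range S) with hr
  have hr2 : r ≤ 2 := by omega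
  have hne1 : r ≠ 1 := by
    intro h1
    have hk : Module.finrank (ZMod 2) (LinearMap.ker S) = 3 := by omega
    set P : Submodule (ZMod 2) (V' × V') :=
      LinearMap.ker (LinearMap.snd (ZMod 2) V' V') with hP
    have hPfin : Module.finrank (ZMod 2) P = 2 := by
      rw [hP, LinearMap.ker_snd, LinearMap.finrank_range_of_inj LinearMap.inl_injective, hdim]
    have hsup := Submodule.finrank_sup_add_finrank_inf_eq (LinearMap.ker S) P
    have hsuple : Module.finrank (ZMod 2)
        ((LinearMap.ker S ⊔ P : Submodule (ZMod 2) (V' × V'))) ≤ 4 := by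
      have h4 := Submodule.finrank_le (LinearMap.ker S ⊔ P)
      rwa [Module.finrank_prod, hdim] at h4
    have hpos : 0 < Module.finrank (ZMod 2)
        ((LinearMap.ker S ⊓ P : Submodule (ZMod 2) (V' × V'))) := by
      omega
    obtain ⟨⟨v, hv⟩, hv0⟩ := Module.finrank_pos_iff_exists_ne_zero.mp hpos
    have hv0' : v ≠ 0 := by
      intro h; apply hv0; exact Subtype.ext h
    obtain ⟨hvker, hvP⟩ := Submodule.mem_inf.mp hv
    have hv2 : v.2 = 0 := LinearMap.mem_ker.mp hvP
    have hv1 : v.1 ≠ 0 := by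
      intro h; apply hv0'; exact Prod.ext h hv2
    have hTv : T v = v := by
      have := LinearMap.mem_ker.mp hvker
      have := sub_eq_zero.mp (by simpa [hSdef, LinearMap.sub_apply] using this)
      simpa using this
    have := (hswap₁ v ⟨hv1, hv2⟩).1
    rw [hTv] at this
    exact hv1 this
  rcases Nat.lt_or_ge r 1 with h | h
  · interval_cases r <;> decide
  · interval_cases r <;> first | decide | omega
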